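/- Let x, h ∈ ℝ^n, let T₀ ⊆ {1,…,n}, let T̃₁,…,T̃_N ⊆ {1,…,n} be pairwise disjoint with union T̃, and let w₁,…,w_N ∈ [0,1]. If ‖x + h‖_{1,w} ≤ ‖x‖_{1,w}, then Σ_{i=1}^N wᵢ‖h_{T̃ᵢ∩T₀ᶜ}‖₁ + ‖h_{T̃ᶜ∩T₀ᶜ}‖₁ ≤ Σ_{i=1}^N wᵢ‖h_{T̃ᵢ∩T₀}‖₁ + ‖h_{T̃ᶜ∩T₀}‖₁ + 2(Σ_{i=1}^N wᵢ‖x_{T̃ᵢ∩T₀ᶜ}‖₁ + ‖x_{T̃ᶜ∩T₀ᶜ}‖₁). -/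
import Mathlib


open Finset

/-- The restriction of a vector to a set of indices: agrees with `x` on `S`, zero elsewhere. -/
noncomputable def restr {n : ℕ} (x : Fin n → ℝ) (S : Finset (Fin n)) : Fin n → ℝ :=
  fun i => if i ∈ S then x i else 0

/-- The ℓ1 norm of a vector in ℝ^n. -/
noncomputable def nrm1 {n : ℕ} (x : Fin n → ℝ) : ℝ := ∑ i, |x i|

/-- The ℓ2 (Euclidean) norm of a vector in ℝ^n. -/
noncomputable def nrm2 {n : ℕ} (x : Fin n → ℝ) : ℝ := Real.sqrt (∑ i, (x i) ^ 2)

/-- The weighted ℓ1 norm associated with support-estimate sets `T 1, …, T N`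
(with weights `w 1, …, w N`), where weight `1` is used off `⋃ i, T i`. -/
noncomputable def wl1 {n : ℕ} (N : ℕ) (T : ℕ → Finset (Fin n)) (w : ℕ → ℝ)
    (x : Fin n → ℝ) : ℝ :=
  ∑ i ∈ Finset.Icc 1 N, w i * nrm1 (restr x (T i)) +
    nrm1 (restr x ((Finset.Icc 1 N).biUnion T)ᶜ)

/-- `A` satisfies the restricted isometry bound with constant `δ` at sparsity level `k`. -/
def RIPBound {m n : ℕ} (A : Matrix (Fin m) (Fin n) ℝ) (δ : ℝ) (k : ℕ) : Prop :=
  ∀ v : Fin n → ℝ, (Finset.univ.filter fun i => v i ≠ 0).card ≤ k →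
    (1 - δ) * (nrm2 v) ^ 2 ≤ (nrm2 (A.mulVec v)) ^ 2 ∧
      (nrm2 (A.mulVec v)) ^ 2 ≤ (1 + δ) * (nrm2 v) ^ 2

/-- The constant `K_N` appearing in the multi-weight recovery guarantee. -/
noncomputable def KN (N : ℕ) (w ρ α : ℕ → ℝ) : ℝ :=
  w N + (1 - w 1) * Real.sqrt (1 + ∑ i ∈ Finset.Icc 1 N, (ρ i - 2 * α i * ρ i)) +
    ∑ j ∈ Finset.Icc 2 N, (w (j - 1) - w j) *
      Real.sqrt (1 + ∑ i ∈ Finset.Icc j N, (ρ i - 2 * α i * ρ i))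

/-- The quantity `D` appearing in the multi-weight error bounds. -/
noncomputable def DD {n : ℕ} (N : ℕ) (T : ℕ → Finset (Fin n)) (T₀ : Finset (Fin n))
    (w : ℕ → ℝ) (x : Fin n → ℝ) : ℝ :=
  (∑ i ∈ Finset.Icc 1 N, w i) * nrm1 (restr x T₀ᶜ) +
    (1 - ∑ i ∈ Finset.Icc 1 N, w i) *
      nrm1 (restr x (((Finset.Icc 1 N).biUnion T)ᶜ ∩ T₀ᶜ)) -
    ∑ i ∈ Finset.Icc 1 N, (∑ j ∈ (Finset.Icc 1 N).erase i, w j) *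
      nrm1 (restr x (T i ∩ T₀ᶜ))

/-- The set `S_j = (T₀ ∪ ⋃_{i=j}^N T̃ᵢ) \ ⋃_{i=j}^N (T̃ᵢ ∩ T₀)`. -/
def SS {n : ℕ} (N : ℕ) (T : ℕ → Finset (Fin n)) (T₀ : Finset (Fin n)) (j : ℕ) :
    Finset (Fin n) :=
  (T₀ ∪ (Finset.Icc j N).biUnion T) \ (Finset.Icc j N).biUnion (fun i => T i ∩ T₀)

lemma nrm1_restr {n : ℕ} (y : Fin n → ℝ) (S : Finset (Fin n)) :
    nrm1 (restr y S) = ∑ i ∈ S, |y i| := by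
  simp [nrm1, restr, apply_ite abs, Finset.sum_ite_mem]

lemma sum_split {n : ℕ} (S T₀ : Finset (Fin n)) (f : Fin n → ℝ) :
    ∑ i ∈ S, f i = ∑ i ∈ S ∩ T₀, f i + ∑ i ∈ S ∩ T₀ᶜ, f i := by
  rw [← Finset.sum_inter_add_sum_sdiff S T₀ f, sdiff_eq, Finset.inf_eq_inter]

lemma key_bound {n : ℕ} (x h : Fin n → ℝ) (T₀ S : Finset (Fin n)) :
    (∑ i ∈ S ∩ T₀, |x i| - ∑ i ∈ S ∩ T₀, |h i|) +
      (∑ i ∈ S ∩ T₀ᶜ, |h i| - ∑ i ∈ S ∩ T₀ᶜ, |x i|) ≤ ∑ i ∈ S, |x i + h i| := by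
  rw [sum_split S T₀ (fun i => |x i + h i|), ← Finset.sum_sub_distrib, ← Finset.sum_sub_distrib]
  gcongr with i hi i hi
  · have := abs_add_le (x i + h i) (-(h i))
    simp only [add_neg_cancel_right, abs_neg] at this
    linarith
  · have := abs_add_le (x i + h i) (-(x i))
    rw [abs_neg, show x i + h i + -(x i) = h i by ring] at this
    linarith

/-- consequence of minimality via the reverse triangle inequality. -/
theorem reverse_triangle_consequence
    {n N : ℕ} (x h : Fin n → ℝ) (T₀ : Finset (Fin n)) (T : ℕ → Finset (Fin n))
    (hdisj : ∀ i ∈ Finset.Icc 1 N, ∀ j ∈ Finset.Icc 1 N, i ≠ j → Disjoint (T i) (T j))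
    (w : ℕ → ℝ) (hw : ∀ i ∈ Finset.Icc 1 N, 0 ≤ w i ∧ w i ≤ 1)
    (hmin : wl1 N T w (x + h) ≤ wl1 N T w x) :
    ∑ i ∈ Finset.Icc 1 N, w i * nrm1 (restr h (T i ∩ T₀ᶜ)) +
        nrm1 (restr h (((Finset.Icc 1 N).biUnion T)ᶜ ∩ T₀ᶜ)) ≤
      ∑ i ∈ Finset.Icc 1 N, w i * nrm1 (restr h (T i ∩ T₀)) +
        nrm1 (restr h (((Finset.Icc 1 N).biUnion T)ᶜ ∩ T₀)) +
        2 * (∑ i ∈ Finset.Icc 1 N, w i * nrm1 (restr x (T i ∩ T₀ᶜ)) +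
          nrm1 (restr x (((Finset.Icc 1 N).biUnion T)ᶜ ∩ T₀ᶜ))) := by
  set C := ((Finset.Icc 1 N).biUnion T)ᶜ with hC
  have hge : ∑ i ∈ Finset.Icc 1 N, w i *
        ((∑ j ∈ T i ∩ T₀, |x j| - ∑ j ∈ T i ∩ T₀, |h j|) +
         (∑ j ∈ T i ∩ T₀ᶜ, |h j| - ∑ j ∈ T i ∩ T₀ᶜ, |x j|)) +
      ((∑ j ∈ C ∩ T₀, |x j| - ∑ j ∈ C ∩ T₀, |h j|) +
       (∑ j ∈ C ∩ T₀ᶜ, |h j| - ∑ j ∈ C ∩ T₀ᶜ, |x j|)) ≤ wl1 N T w (x + h) := by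
    unfold wl1
    gcongr with i hi
    · exact (hw i hi).1
    · have := key_bound x h T₀ (T i)
      simpa [nrm1_restr] using this
    · have := key_bound x h T₀ C
      simpa [nrm1_restr] using this
  have hx : wl1 N T w x = ∑ i ∈ Finset.Icc 1 N, w i *
        (∑ j ∈ T i ∩ T₀, |x j| + ∑ j ∈ T i ∩ T₀ᶜ, |x j|) +
      (∑ j ∈ C ∩ T₀, |x j| + ∑ j ∈ C ∩ T₀ᶜ, |x j|) := by
    unfold wl1
    simp only [nrm1_restr]
    rw [sum_split C T₀ (fun i => |x i|)]
    congr 1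
    exact Finset.sum_congr rfl fun i _ => by rw [sum_split (T i) T₀ (fun j => |x j|)]
  simp only [nrm1_restr]
  have e1 : ∑ i ∈ Finset.Icc 1 N, w i *
        ((∑ j ∈ T i ∩ T₀, |x j| - ∑ j ∈ T i ∩ T₀, |h j|) +
         (∑ j ∈ T i ∩ T₀ᶜ, |h j| - ∑ j ∈ T i ∩ T₀ᶜ, |x j|)) =
      ∑ i ∈ Finset.Icc 1 N, w i * ∑ j ∈ T i ∩ T₀, |x j| -
      ∑ i ∈ Finset.Icc 1 N, w i * ∑ j ∈ T i ∩ T₀, |h j| +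
      ∑ i ∈ Finset.Icc 1 N, w i * ∑ j ∈ T i ∩ T₀ᶜ, |h j| -
      ∑ i ∈ Finset.Icc 1 N, w i * ∑ j ∈ T i ∩ T₀ᶜ, |x j| := by
    rw [← Finset.sum_sub_distrib, ← Finset.sum_add_distrib, ← Finset.sum_sub_distrib]
    exact Finset.sum_congr rfl fun i _ => by ring
  have e2 : ∑ i ∈ Finset.Icc 1 N, w i *
        (∑ j ∈ T i ∩ T₀, |x j| + ∑ j ∈ T i ∩ T₀ᶜ, |x j|) =
      ∑ i ∈ Finset.Icc 1 N, w i * ∑ j ∈ T i ∩ T₀, |x j| +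
      ∑ i ∈ Finset.Icc 1 N, w i * ∑ j ∈ T i ∩ T₀ᶜ, |x j| := by
    rw [← Finset.sum_add_distrib]
    exact Finset.sum_congr rfl fun i _ => by ring
  rw [e1] at hge
  rw [e2] at hx
  linarith
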